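/- Let Ξ_{≥α} = {x ∈ K : liminf_{r→0} log μ(B(x,r))/log r ≥ α}. If the open set condition holds and α ≥ α(0) = -β'(0), then the packing dimension of Ξ_{≥α} is at most β*(α) = inf_q (αq + β(q)). -/

import Mathlib

open Metric MeasureTheory Topology Filter
open scoped NNReal ENNReal

/-- The `δ`-pre-packing content `P^s_δ`-style supremum: the supremum of `∑ diam(B_i)^s`
over countable disjoint families of closed balls of diameter at most `δ` centred in `A`,
followed by letting `δ → 0`.  This is the pre-packing measure `P^s(A)`. -/
noncomputable def prePackingMeasure {X : Type*} [MetricSpace X] (s : ℝ) (A : Set X) : ℝ≥0∞ :=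
  ⨅ (δ : ℝ) (_ : 0 < δ),
    ⨆ (c : ℕ → X) (ρ : ℕ → ℝ) (_ : ∀ n, c n ∈ A) (_ : ∀ n, 0 < ρ n ∧ 2 * ρ n ≤ δ)
      (_ : Pairwise fun m n => Disjoint (closedBall (c m) (ρ m)) (closedBall (c n) (ρ n))),
      ∑' n, ENNReal.ofReal (2 * ρ n) ^ s

/-- The packing measure `𝒫^s(A) = inf { ∑ᵢ P^s(Aᵢ) : A ⊆ ⋃ᵢ Aᵢ }`. -/
noncomputable def packingMeasure {X : Type*} [MetricSpace X] (s : ℝ) (A : Set X) : ℝ≥0∞ :=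
  ⨅ (f : ℕ → Set X) (_ : A ⊆ ⋃ n, f n), ∑' n, prePackingMeasure s (f n)

/-- The packing dimension `dim_P A = inf { s ≥ 0 : 𝒫^s(A) = 0 }`. -/
noncomputable def dimP {X : Type*} [MetricSpace X] (A : Set X) : ℝ :=
  sInf {s : ℝ | 0 ≤ s ∧ packingMeasure s A = 0}

set_option linter.unusedSectionVars false
set_option maxHeartbeats 2000000
namespace DimPAux

variable {E : Type*} [MetricSpace E]

/-- composition of the maps along a word -/
def wMap {N : ℕ} (S : Fin N → E → E) : List (Fin N) → E → E
  | [] => id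
  | i :: l => S i ∘ wMap S l

/-- product of a weight along a word -/
def wProd {N : ℕ} (f : Fin N → ℝ) (l : List (Fin N)) : ℝ := (l.map f).prod

variable {N : ℕ} {S : Fin N → E → E} {r p : Fin N → ℝ}

@[simp] lemma wMap_nil : wMap S [] = id := rfl
@[simp] lemma wMap_cons (i : Fin N) (l : List (Fin N)) : wMap S (i :: l) = S i ∘ wMap S l := rfl
@[simp] lemma wProd_nil (f : Fin N → ℝ) : wProd f [] = 1 := rfl
@[simp] lemma wProd_cons (f : Fin N → ℝ) (i : Fin N) (l : List (Fin N)) :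
    wProd f (i :: l) = f i * wProd f l := by simp [wProd]

lemma wProd_pos {f : Fin N → ℝ} (hf : ∀ i, 0 < f i) (l : List (Fin N)) : 0 < wProd f l := by
  induction l with
  | nil => simp
  | cons i l ih => simpa using mul_pos (hf i) ih

lemma wProd_nonneg {f : Fin N → ℝ} (hf : ∀ i, 0 ≤ f i) (l : List (Fin N)) : 0 ≤ wProd f l := by
  induction l with
  | nil => simp
  | cons i l ih => simpa using mul_nonneg (hf i) ih

lemma wProd_le_pow {f : Fin N → ℝ} {c : ℝ} (hf0 : ∀ i, 0 ≤ f i) (hf : ∀ i, f i ≤ c)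
    (hc : 0 ≤ c) (l : List (Fin N)) : wProd f l ≤ c ^ l.length := by
  induction l with
  | nil => simp
  | cons i l ih =>
    simp only [wProd_cons, List.length_cons, pow_succ]
    rw [mul_comm (c ^ l.length) c]
    exact mul_le_mul (hf i) ih (wProd_nonneg hf0 l) hc

lemma dist_wMap (hS : ∀ i x y, dist (S i x) (S i y) = r i * dist x y) (l : List (Fin N)) :
    ∀ x y, dist (wMap S l x) (wMap S l y) = wProd r l * dist x y := by
  induction l with
  | nil => simp
  | cons i l ih => intro x y; simp [hS, ih, mul_assoc]

end DimPAux

namespace DimPAux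

variable {E : Type*} [MetricSpace E] {N : ℕ} {S : Fin N → E → E} {r p : Fin N → ℝ}

lemma continuous_of_dist (hri : 0 < (1:ℝ)) {i : Fin N} (hr : 0 < r i)
    (hS : ∀ x y, dist (S i x) (S i y) = r i * dist x y) : Continuous (S i) :=
  (LipschitzWith.of_dist_le_mul (K := ⟨r i, hr.le⟩) (fun x y => (hS x y).le)).continuous

lemma continuous_wMap (hr : ∀ i, 0 < r i)
    (hS : ∀ i x y, dist (S i x) (S i y) = r i * dist x y) (l : List (Fin N)) :
    Continuous (wMap S l) := by
  induction l with
  | nil => exact continuous_id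
  | cons i l ih => exact (continuous_of_dist one_pos (hr i) (hS i)).comp ih

lemma wMap_image_subset {K : Set E} (hK : K = ⋃ i, S i '' K) (l : List (Fin N)) :
    wMap S l '' K ⊆ K := by
  induction l with
  | nil => simp
  | cons i l ih =>
    intro x hx
    obtain ⟨y, hy, rfl⟩ := hx
    have : wMap S l y ∈ K := ih ⟨y, hy, rfl⟩
    have : S i (wMap S l y) ∈ S i '' K := ⟨_, this, rfl⟩
    rw [hK]; exact Set.mem_iUnion.2 ⟨i, this⟩

end DimPAux

namespace DimPAux

variable {E : Type*} [MetricSpace E] [MeasurableSpace E] [BorelSpace E]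
  {N : ℕ} {S : Fin N → E → E} {r p : Fin N → ℝ}
  {μ : Measure E}

lemma measure_apply_eq (hr : ∀ i, 0 < r i)
    (hS : ∀ i x y, dist (S i x) (S i y) = r i * dist x y)
    (hμ : μ = ∑ i, ENNReal.ofReal (p i) • μ.map (S i))
    {B : Set E} (hB : MeasurableSet B) :
    μ B = ∑ i, ENNReal.ofReal (p i) * μ (S i ⁻¹' B) := by
  conv_lhs => rw [hμ]
  rw [Measure.finset_sum_apply]
  refine Finset.sum_congr rfl fun i _ => ?_
  rw [Measure.smul_apply, smul_eq_mul,
    Measure.map_apply (continuous_of_dist one_pos (hr i) (hS i)).measurable hB]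

lemma le_measure_of_words (hr : ∀ i, 0 < r i)
    (hS : ∀ i x y, dist (S i x) (S i y) = r i * dist x y)
    (hp : ∀ i, 0 ≤ p i) (hpsum : ∑ i, p i = 1)
    (hμ : μ = ∑ i, ENNReal.ofReal (p i) • μ.map (S i)) :
    ∀ (n : ℕ) (A : Set E), MeasurableSet A → ∀ (W : Set E),
      (∀ l : List (Fin N), l.length = n → ∀ y ∈ W, wMap S l y ∈ A) → μ W ≤ μ A := by
  intro n
  induction n with
  | zero =>
    intro A _ W h
    exact measure_mono fun y hy => by simpa using h [] rfl y hy
  | succ n ih =>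
    intro A hA W h
    rw [measure_apply_eq hr hS hμ hA]
    have key : ∀ i : Fin N, μ W ≤ μ (S i ⁻¹' A) := by
      intro i
      refine ih _ (hA.preimage (continuous_of_dist one_pos (hr i) (hS i)).measurable) W ?_
      intro l hl y hy
      exact h (i :: l) (by simp [hl]) y hy
    calc μ W = (∑ i, ENNReal.ofReal (p i)) * μ W := by
          rw [← ENNReal.ofReal_sum_of_nonneg (fun i _ => hp i), hpsum, ENNReal.ofReal_one, one_mul]
      _ = ∑ i, ENNReal.ofReal (p i) * μ W := by rw [Finset.sum_mul]
      _ ≤ ∑ i, ENNReal.ofReal (p i) * μ (S i ⁻¹' A) :=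
          Finset.sum_le_sum fun i _ => mul_le_mul_right (key i) _

end DimPAux

namespace DimPAux

variable {E : Type*} [MetricSpace E] [MeasurableSpace E] [BorelSpace E]
  {N : ℕ} {S : Fin N → E → E} {r p : Fin N → ℝ}
  {μ : Measure E}

lemma measure_attractor_eq_one (hr : ∀ i, 0 < r i)
    (hS : ∀ i x y, dist (S i x) (S i y) = r i * dist x y)
    (hp : ∀ i, 0 ≤ p i) (hpsum : ∑ i, p i = 1)
    (hμ : μ = ∑ i, ENNReal.ofReal (p i) • μ.map (S i)) [IsProbabilityMeasure μ]
    {rmax : ℝ} (hrm0 : 0 ≤ rmax) (hrm1 : rmax < 1) (hrle : ∀ i, r i ≤ rmax)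
    {K : Set E} (hKne : K.Nonempty) (hKcl : IsClosed K) (hK : K = ⋃ i, S i '' K) :
    μ K = 1 := by
  obtain ⟨x₀, hx₀⟩ := hKne
  -- each thickening has measure one
  have hthick : ∀ ε : ℝ, 0 < ε → μ (Metric.thickening ε K) = 1 := by
    intro ε hε
    refine le_antisymm prob_le_one ?_
    have hball : ∀ R : ℕ, μ (closedBall x₀ R) ≤ μ (Metric.thickening ε K) := by
      intro R
      -- choose n with rmax ^ n * (R+1) < ε
      have : Tendsto (fun n : ℕ => rmax ^ n * (R + 1)) atTop (nhds 0) := by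
        simpa using (tendsto_pow_atTop_nhds_zero_of_lt_one hrm0 hrm1).mul_const ((R:ℝ)+1)
      obtain ⟨n, hn⟩ := (this.eventually (eventually_lt_nhds hε)).exists
      refine le_measure_of_words hr hS hp hpsum hμ n _
        isOpen_thickening.measurableSet _ ?_
      intro l hl y hy
      rw [Metric.mem_thickening_iff]
      refine ⟨wMap S l x₀, wMap_image_subset hK l ⟨x₀, hx₀, rfl⟩, ?_⟩
      rw [dist_wMap hS]
      calc wProd r l * dist y x₀ ≤ rmax ^ n * (R + 1) := by
            apply mul_le_mul
            · simpa [hl] using wProd_le_pow (fun i => (hr i).le) hrle hrm0 l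
            · calc dist y x₀ ≤ (R:ℝ) := by simpa [Metric.mem_closedBall] using hy
                _ ≤ (R:ℝ) + 1 := by linarith
            · exact dist_nonneg
            · exact pow_nonneg hrm0 n
        _ < ε := hn
    have hiUnion : (⋃ R : ℕ, closedBall x₀ R) = Set.univ := by
      ext y
      simp only [Set.mem_iUnion, Set.mem_univ, iff_true, Metric.mem_closedBall]
      obtain ⟨R, hR⟩ := exists_nat_ge (dist y x₀)
      exact ⟨R, hR⟩
    have hmono : Monotone fun R : ℕ => closedBall x₀ (R : ℝ) :=
      fun a b hab => Metric.closedBall_subset_closedBall (by exact_mod_cast hab)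
    have : μ Set.univ = ⨆ R : ℕ, μ (closedBall x₀ R) := by
      rw [← hiUnion]
      exact Directed.measure_iUnion hmono.directed_le
    rw [measure_univ] at this
    rw [this]
    exact iSup_le hball
  -- K is the intersection of its thickenings
  have hiInter : (⋂ k : ℕ, Metric.thickening (1 / (k + 1)) K) = K := by
    refine Set.Subset.antisymm ?_ fun x hx => Set.mem_iInter.2 fun k =>
      Metric.self_subset_thickening (by positivity) K hx
    intro x hx
    rw [← hKcl.closure_eq, EMetric.mem_closure_iff_infEdist_zero]
    have hle : ∀ k : ℕ, EMetric.infEdist x K ≤ ENNReal.ofReal (1 / (k + 1)) := by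
      intro k
      have := Set.mem_iInter.1 hx k
      rw [Metric.mem_thickening_iff_infEdist_lt] at this
      exact this.le
    refine le_antisymm ?_ zero_le
    have : Tendsto (fun k : ℕ => ENNReal.ofReal (1 / (k + 1))) atTop (nhds 0) := by
      rw [← ENNReal.ofReal_zero]
      refine (ENNReal.continuous_ofReal.tendsto 0).comp ?_
      exact tendsto_one_div_add_atTop_nhds_zero_nat
    exact ge_of_tendsto this (Eventually.of_forall hle)
  rw [← hiInter]
  have hmeas : ∀ k : ℕ, NullMeasurableSet (Metric.thickening (1 / (k + 1)) K) μ :=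
    fun k => isOpen_thickening.measurableSet.nullMeasurableSet
  have hdir : Directed (· ⊇ ·) fun k : ℕ => Metric.thickening (1 / (k + 1)) K := by
    refine (antitone_nat_of_succ_le ?_).directed_ge
    intro k
    apply Metric.thickening_mono
    apply one_div_le_one_div_of_le
    · positivity
    · push_cast; linarith
  rw [Directed.measure_iInter hmeas hdir ⟨0, measure_ne_top μ _⟩]
  have : ∀ k : ℕ, μ (Metric.thickening (1 / (k + 1 : ℝ)) K) = 1 := fun k => hthick _ (by positivity)
  simp only [this, iInf_const]

end DimPAux

namespace DimPAux

variable {E : Type*} [MetricSpace E] [MeasurableSpace E] [BorelSpace E]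
  {N : ℕ} {S : Fin N → E → E} {r p : Fin N → ℝ}
  {μ : Measure E}

lemma measure_image_ge (hr : ∀ i, 0 < r i)
    (hS : ∀ i x y, dist (S i x) (S i y) = r i * dist x y)
    (hp : ∀ i, 0 ≤ p i)
    (hμ : μ = ∑ i, ENNReal.ofReal (p i) • μ.map (S i))
    {i : Fin N} {A : Set E} (hA : MeasurableSet (S i '' A)) :
    ENNReal.ofReal (p i) * μ A ≤ μ (S i '' A) := by
  rw [measure_apply_eq hr hS hμ hA]
  calc ENNReal.ofReal (p i) * μ A
      ≤ ENNReal.ofReal (p i) * μ (S i ⁻¹' (S i '' A)) :=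
        mul_le_mul_right (measure_mono (Set.subset_preimage_image _ _)) _
    _ ≤ ∑ j, ENNReal.ofReal (p j) * μ (S j ⁻¹' (S i '' A)) :=
        Finset.single_le_sum (f := fun j => ENNReal.ofReal (p j) * μ (S j ⁻¹' (S i '' A))) (fun j _ => zero_le) (Finset.mem_univ i)

lemma measure_cylinder_ge (hr : ∀ i, 0 < r i)
    (hS : ∀ i x y, dist (S i x) (S i y) = r i * dist x y)
    (hp : ∀ i, 0 ≤ p i)
    (hμ : μ = ∑ i, ENNReal.ofReal (p i) • μ.map (S i))
    {K : Set E} (hKc : IsCompact K) (l : List (Fin N)) :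
    ENNReal.ofReal (wProd p l) * μ K ≤ μ (wMap S l '' K) := by
  induction l with
  | nil => simp
  | cons i l ih =>
    have hcomp : IsCompact (wMap S l '' K) := hKc.image (continuous_wMap hr hS l)
    have hmeas : MeasurableSet (S i '' (wMap S l '' K)) :=
      (hcomp.image (continuous_of_dist one_pos (hr i) (hS i))).isClosed.measurableSet
    calc ENNReal.ofReal (wProd p (i :: l)) * μ K
        = ENNReal.ofReal (p i) * (ENNReal.ofReal (wProd p l) * μ K) := by
          rw [wProd_cons, ENNReal.ofReal_mul (hp i), mul_assoc]
      _ ≤ ENNReal.ofReal (p i) * μ (wMap S l '' K) := mul_le_mul_right ih _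
      _ ≤ μ (S i '' (wMap S l '' K)) := measure_image_ge hr hS hp hμ hmeas
      _ = μ (wMap S (i :: l) '' K) := by rw [wMap_cons, Set.image_comp]

end DimPAux

namespace DimPAux

variable {E : Type*} [MetricSpace E]
  {N : ℕ} {S : Fin N → E → E} {r p : Fin N → ℝ}

lemma exists_word_aux {K : Set E} (hK : K = ⋃ i, S i '' K)
    {rmin rmax D : ℝ} (hrmin0 : 0 < rmin) (hrminle : ∀ i, rmin ≤ r i)
    (hrle : ∀ i, r i ≤ rmax) (hrm0 : 0 < rmax) (hD : 0 < D) :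
    ∀ (n : ℕ) (ρ : ℝ) (x : E), x ∈ K → 0 < ρ → ρ * rmin ≤ D → D * rmax ^ n < ρ →
      ∃ l : List (Fin N), x ∈ wMap S l '' K ∧ wProd r l * D < ρ ∧ ρ * rmin ≤ wProd r l * D := by
  have hr : ∀ i, 0 < r i := fun i => lt_of_lt_of_le hrmin0 (hrminle i)
  intro n
  induction n with
  | zero =>
    intro ρ x hx hρ hρD hlt
    exact ⟨[], by simpa using hx, by simpa using hlt, by simpa using hρD⟩
  | succ n ih =>
    intro ρ x hx hρ hρD hlt
    by_cases hcase : D < ρ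
    · exact ⟨[], by simpa using hx, by simpa using hcase, by simpa using hρD⟩
    · push_neg at hcase
      -- peel one map
      have hx' : x ∈ ⋃ i, S i '' K := hK ▸ hx
      obtain ⟨i, y, hy, rfl⟩ := by simpa using hx'
      have hρ' : 0 < ρ / r i := div_pos hρ (hr i)
      have h1 : (ρ / r i) * rmin ≤ D := by
        rw [div_mul_eq_mul_div, div_le_iff₀ (hr i)]
        calc ρ * rmin ≤ D * rmin := by nlinarith [hrminle i, hr i]
          _ ≤ D * r i := by nlinarith [hrminle i]
      have h2 : D * rmax ^ n < ρ / r i := by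
        rw [lt_div_iff₀ (hr i)]
        calc D * rmax ^ n * r i ≤ D * rmax ^ n * rmax := by
              have : (0:ℝ) ≤ D * rmax ^ n := by positivity
              nlinarith [hrle i]
          _ = D * rmax ^ (n + 1) := by ring
          _ < ρ := hlt
      obtain ⟨l, hyl, hl1, hl2⟩ := ih (ρ / r i) y hy hρ' h1 h2
      refine ⟨i :: l, ?_, ?_, ?_⟩
      · obtain ⟨z, hz, hzy⟩ := hyl
        exact ⟨z, hz, by simp [← hzy]⟩
      · rw [wProd_cons, mul_assoc]
        calc r i * (wProd r l * D) < r i * (ρ / r i) := by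
              exact (mul_lt_mul_iff_right₀ (hr i)).2 hl1
          _ = ρ := by field_simp [(hr i).ne']
      · rw [wProd_cons, mul_assoc]
        calc ρ * rmin = r i * ((ρ / r i) * rmin) := by field_simp [(hr i).ne']
          _ ≤ r i * (wProd r l * D) := (mul_le_mul_iff_right₀ (hr i)).2 hl2

lemma exists_word {K : Set E} (hK : K = ⋃ i, S i '' K)
    {rmin rmax D : ℝ} (hrmin0 : 0 < rmin) (hrmin1 : rmin ≤ 1) (hrminle : ∀ i, rmin ≤ r i)
    (hrle : ∀ i, r i ≤ rmax) (hrm0 : 0 < rmax) (hrm1 : rmax < 1) (hD : 0 < D)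
    {ρ : ℝ} (hρ : 0 < ρ) (hρD : ρ ≤ D) {x : E} (hx : x ∈ K) :
    ∃ l : List (Fin N), x ∈ wMap S l '' K ∧ wProd r l * D < ρ ∧ ρ * rmin ≤ wProd r l * D := by
  obtain ⟨n, hn⟩ : ∃ n : ℕ, rmax ^ n < ρ / D := exists_pow_lt_of_lt_one (div_pos hρ hD) hrm1
  refine exists_word_aux hK hrmin0 hrminle hrle hrm0 hD n ρ x hx hρ ?_ ?_
  · nlinarith
  · rw [mul_comm]
    calc rmax ^ n * D < (ρ / D) * D := by nlinarith [pow_pos hrm0 n]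
      _ = ρ := by field_simp

end DimPAux

namespace DimPAux

section Beta

variable {N : ℕ} {r p : Fin N → ℝ} {β : ℝ → ℝ}

lemma p_le_one (hp : ∀ i, 0 < p i) (hpsum : ∑ i, p i = 1) (i : Fin N) : p i ≤ 1 := by
  rw [← hpsum]
  exact Finset.single_le_sum (f := p) (fun j _ => (hp j).le) (Finset.mem_univ i)

lemma term_pos (hr : ∀ i, r i ∈ Set.Ioo (0:ℝ) 1) (hp : ∀ i, 0 < p i) (q t : ℝ) (i : Fin N) :
    0 < p i ^ q * r i ^ t :=
  mul_pos (Real.rpow_pos_of_pos (hp i) q) (Real.rpow_pos_of_pos (hr i).1 t)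

lemma beta_term_le_one (hr : ∀ i, r i ∈ Set.Ioo (0:ℝ) 1) (hp : ∀ i, 0 < p i)
    (hβ : ∀ q, ∑ i, p i ^ q * r i ^ β q = 1) (q : ℝ) (i : Fin N) :
    p i ^ q * r i ^ β q ≤ 1 := by
  rw [← hβ q]
  exact Finset.single_le_sum (f := fun j => p j ^ q * r j ^ β q)
    (fun j _ => (term_pos hr hp q _ j).le) (Finset.mem_univ i)

lemma beta_log_le (hr : ∀ i, r i ∈ Set.Ioo (0:ℝ) 1) (hp : ∀ i, 0 < p i)
    (hβ : ∀ q, ∑ i, p i ^ q * r i ^ β q = 1) (q : ℝ) (i : Fin N) :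
    q * Real.log (p i) + β q * Real.log (r i) ≤ 0 := by
  have h := beta_term_le_one hr hp hβ q i
  have := Real.log_le_log (term_pos hr hp q (β q) i) h
  rwa [Real.log_one, Real.log_mul (Real.rpow_pos_of_pos (hp i) q).ne'
    (Real.rpow_pos_of_pos (hr i).1 _).ne', Real.log_rpow (hp i), Real.log_rpow (hr i).1] at this

lemma beta_log_ge (hN : 1 ≤ N) (hr : ∀ i, r i ∈ Set.Ioo (0:ℝ) 1) (hp : ∀ i, 0 < p i)
    (hβ : ∀ q, ∑ i, p i ^ q * r i ^ β q = 1) (q : ℝ) :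
    ∃ i, -Real.log N ≤ q * Real.log (p i) + β q * Real.log (r i) := by
  have hNpos : (0:ℝ) < N := by exact_mod_cast hN
  have hcard : ∑ _i : Fin N, (1:ℝ)/N = 1 := by
    rw [Finset.sum_const, Finset.card_univ, Fintype.card_fin, nsmul_eq_mul]
    field_simp
  have hsle : ∑ _i : Fin N, (1:ℝ)/N ≤ ∑ i, p i ^ q * r i ^ β q := by rw [hcard, hβ]
  obtain ⟨i, _, hi⟩ := Finset.exists_le_of_sum_le (f := fun _ : Fin N => (1:ℝ)/N)
    (g := fun i => p i ^ q * r i ^ β q) ⟨⟨0, hN⟩, Finset.mem_univ _⟩ hsle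
  refine ⟨i, ?_⟩
  have hpos : (0:ℝ) < 1/N := by positivity
  have := Real.log_le_log hpos hi
  rwa [Real.log_div one_ne_zero hNpos.ne', Real.log_one, zero_sub,
    Real.log_mul (Real.rpow_pos_of_pos (hp i) q).ne'
      (Real.rpow_pos_of_pos (hr i).1 _).ne', Real.log_rpow (hp i), Real.log_rpow (hr i).1] at this

lemma sum_lt_sum_of_lt (hr : ∀ i, r i ∈ Set.Ioo (0:ℝ) 1) (hp : ∀ i, 0 < p i) (hN : 1 ≤ N)
    (q : ℝ) {t1 t2 : ℝ} (h12 : t1 < t2) :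
    ∑ i, p i ^ q * r i ^ t2 < ∑ i, p i ^ q * r i ^ t1 := by
  refine Finset.sum_lt_sum_of_nonempty ⟨⟨0, hN⟩, Finset.mem_univ _⟩ fun i _ => ?_
  exact mul_lt_mul_of_pos_left
    (Real.rpow_lt_rpow_of_exponent_gt (hr i).1 (hr i).2 h12)
    (Real.rpow_pos_of_pos (hp i) q)

lemma beta_antitone (hr : ∀ i, r i ∈ Set.Ioo (0:ℝ) 1) (hp : ∀ i, 0 < p i)
    (hpsum : ∑ i, p i = 1) (hN : 1 ≤ N)
    (hβ : ∀ q, ∑ i, p i ^ q * r i ^ β q = 1) : Antitone β := by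
  intro q1 q2 h12
  by_contra hlt
  push_neg at hlt
  have h1 : ∑ i, p i ^ q2 * r i ^ β q2 < ∑ i, p i ^ q2 * r i ^ β q1 :=
    sum_lt_sum_of_lt hr hp hN q2 hlt
  have h2 : ∑ i, p i ^ q2 * r i ^ β q1 ≤ ∑ i, p i ^ q1 * r i ^ β q1 := by
    refine Finset.sum_le_sum fun i _ => ?_
    refine mul_le_mul_of_nonneg_right ?_ (Real.rpow_pos_of_pos (hr i).1 _).le
    exact Real.rpow_le_rpow_of_exponent_ge (hp i) (p_le_one hp hpsum i) h12
  rw [hβ q1, hβ q2] at *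
  linarith

lemma beta_convex (hr : ∀ i, r i ∈ Set.Ioo (0:ℝ) 1) (hp : ∀ i, 0 < p i) (hN : 1 ≤ N)
    (hβ : ∀ q, ∑ i, p i ^ q * r i ^ β q = 1) : ConvexOn ℝ Set.univ β := by
  refine ⟨convex_univ, ?_⟩
  intro q1 _ q2 _ a b ha hb hab
  simp only [smul_eq_mul]
  by_contra hlt
  push_neg at hlt
  set q := a * q1 + b * q2 with hq
  set T := a * β q1 + b * β q2 with hT
  have key : ∑ i, p i ^ q * r i ^ T ≤ 1 := by
    have hterm : ∀ i : Fin N, p i ^ q * r i ^ T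
        = (p i ^ q1 * r i ^ β q1) ^ a * (p i ^ q2 * r i ^ β q2) ^ b := by
      intro i
      have e1 : p i ^ q = (p i ^ q1) ^ a * (p i ^ q2) ^ b := by
        rw [hq, show a * q1 + b * q2 = q1 * a + q2 * b by ring, Real.rpow_add (hp i),
          Real.rpow_mul (hp i).le, Real.rpow_mul (hp i).le]
      have e2 : r i ^ T = (r i ^ β q1) ^ a * (r i ^ β q2) ^ b := by
        rw [hT, show a * β q1 + b * β q2 = β q1 * a + β q2 * b by ring,
          Real.rpow_add (hr i).1, Real.rpow_mul (hr i).1.le, Real.rpow_mul (hr i).1.le]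
      rw [e1, e2, Real.mul_rpow (Real.rpow_pos_of_pos (hp i) q1).le
          (Real.rpow_pos_of_pos (hr i).1 (β q1)).le,
        Real.mul_rpow (Real.rpow_pos_of_pos (hp i) q2).le
          (Real.rpow_pos_of_pos (hr i).1 (β q2)).le]
      ring
    calc ∑ i, p i ^ q * r i ^ T
        = ∑ i, (p i ^ q1 * r i ^ β q1) ^ a * (p i ^ q2 * r i ^ β q2) ^ b :=
          Finset.sum_congr rfl fun i _ => hterm i
      _ ≤ ∑ i, (a * (p i ^ q1 * r i ^ β q1) + b * (p i ^ q2 * r i ^ β q2)) := by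
          refine Finset.sum_le_sum fun i _ => ?_
          exact Real.geom_mean_le_arith_mean2_weighted ha hb
            (term_pos hr hp q1 _ i).le (term_pos hr hp q2 _ i).le hab
      _ = a * (∑ i, p i ^ q1 * r i ^ β q1) + b * (∑ i, p i ^ q2 * r i ^ β q2) := by
          rw [Finset.sum_add_distrib, Finset.mul_sum, Finset.mul_sum]
      _ = 1 := by rw [hβ, hβ]; linarith
  have : (1:ℝ) < ∑ i, p i ^ q * r i ^ T := by
    rw [← hβ q]
    exact sum_lt_sum_of_lt hr hp hN q hlt
  linarith

lemma beta_support_line (hr : ∀ i, r i ∈ Set.Ioo (0:ℝ) 1) (hp : ∀ i, 0 < p i) (hN : 1 ≤ N)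
    (hβ : ∀ q, ∑ i, p i ^ q * r i ^ β q = 1)
    {β'0 : ℝ} (hβ' : HasDerivAt β β'0 0) {y : ℝ} (hy : 0 < y) :
    β 0 + β'0 * y ≤ β y := by
  have hconv := beta_convex hr hp hN hβ
  have hslope : Tendsto (slope β 0) (nhdsWithin 0 {(0:ℝ)}ᶜ) (nhds β'0) :=
    hasDerivAt_iff_tendsto_slope.1 hβ'
  have hslope' : Tendsto (slope β 0) (nhdsWithin 0 (Set.Ioi 0)) (nhds β'0) :=
    hslope.mono_left (nhdsWithin_mono 0 fun z hz => ne_of_gt hz)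
  have hev : ∀ᶠ h in nhdsWithin (0:ℝ) (Set.Ioi 0), slope β 0 h ≤ slope β 0 y := by
    filter_upwards [Ioo_mem_nhdsGT_of_mem (Set.mem_Ico.2 ⟨le_refl 0, hy⟩)] with h hh
    have := hconv.secant_mono (Set.mem_univ 0) (Set.mem_univ h) (Set.mem_univ y)
      (ne_of_gt hh.1) (ne_of_gt hy) hh.2.le
    simpa [slope_def_field] using this
  have : β'0 ≤ slope β 0 y := le_of_tendsto hslope' hev
  rw [slope_def_field] at this
  have : β'0 * y ≤ β y - β 0 := by
    have hy' : y - 0 = y := by ring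
    calc β'0 * y ≤ ((β y - β 0) / (y - 0)) * y := by
          rw [hy']
          exact mul_le_mul_of_nonneg_right (by simpa [slope, hy'] using this) hy.le
      _ = β y - β 0 := by rw [hy']; field_simp [hy.ne']
  linarith

lemma beta_deriv_nonpos (hr : ∀ i, r i ∈ Set.Ioo (0:ℝ) 1) (hp : ∀ i, 0 < p i)
    (hpsum : ∑ i, p i = 1) (hN : 1 ≤ N)
    (hβ : ∀ q, ∑ i, p i ^ q * r i ^ β q = 1)
    {β'0 : ℝ} (hβ' : HasDerivAt β β'0 0) : β'0 ≤ 0 := by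
  have hanti := beta_antitone hr hp hpsum hN hβ
  have hslope : Tendsto (slope β 0) (nhdsWithin 0 (Set.Ioi 0)) (nhds β'0) :=
    (hasDerivAt_iff_tendsto_slope.1 hβ').mono_left (nhdsWithin_mono 0 fun z hz => ne_of_gt hz)
  refine le_of_tendsto hslope ?_
  filter_upwards [self_mem_nhdsWithin] with h hh
  rw [slope_def_field]
  apply div_nonpos_of_nonpos_of_nonneg
  · have := hanti (le_of_lt (Set.mem_Ioi.1 hh))
    linarith
  · have := Set.mem_Ioi.1 hh; linarith

end Beta
end DimPAux

namespace DimPAux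

variable {N : ℕ}

lemma wProd_rpow_mul {p r : Fin N → ℝ} (hp : ∀ i, 0 < p i) (hr : ∀ i, 0 < r i) (q t : ℝ) :
    ∀ l : List (Fin N), wProd p l ^ q * wProd r l ^ t = wProd (fun i => p i ^ q * r i ^ t) l := by
  intro l
  induction l with
  | nil => simp
  | cons i l ih =>
    rw [wProd_cons, wProd_cons, wProd_cons,
      Real.mul_rpow (hp i).le (wProd_nonneg (fun j => (hp j).le) l),
      Real.mul_rpow (hr i).le (wProd_nonneg (fun j => (hr j).le) l), ← ih]
    ring

lemma sum_wProd_le {f : Fin N → ℝ} (hf : ∀ i, 0 ≤ f i) {c : ℝ}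
    (hc : ∑ i, f i ≤ c) (hc1 : c < 1) (w : Finset (List (Fin N))) :
    ∑ l ∈ w, wProd f l ≤ (1 - c)⁻¹ := by
  classical
  have hc0 : 0 ≤ c := le_trans (Finset.sum_nonneg fun i _ => hf i) hc
  set m := w.sup List.length with hm
  have hmaps : ∀ l ∈ w, l.length ∈ Finset.range (m + 1) := by
    intro l hl
    rw [Finset.mem_range]
    exact Nat.lt_succ_of_le (Finset.le_sup hl)
  rw [← Finset.sum_fiberwise_of_maps_to hmaps]
  have hfiber : ∀ j : ℕ, ∑ l ∈ w.filter (fun l => l.length = j), wProd f l ≤ c ^ j := by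
    intro j
    have hsub : w.filter (fun l => l.length = j) ⊆
        (Finset.univ : Finset (Fin j → Fin N)).image (fun v => List.ofFn v) := by
      intro l hl
      have hlen : l.length = j := (Finset.mem_filter.1 hl).2
      subst hlen
      refine Finset.mem_image.2 ⟨fun i => l.get i, Finset.mem_univ _, ?_⟩
      exact List.ofFn_get l
    calc ∑ l ∈ w.filter (fun l => l.length = j), wProd f l
        ≤ ∑ l ∈ (Finset.univ : Finset (Fin j → Fin N)).image (fun v => List.ofFn v),
            wProd f l :=
          Finset.sum_le_sum_of_subset_of_nonneg hsub
            (fun l _ _ => wProd_nonneg hf l)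
      _ = ∑ v : Fin j → Fin N, wProd f (List.ofFn v) :=
          Finset.sum_image (fun a _ b _ h => List.ofFn_injective h)
      _ = ∑ v : Fin j → Fin N, ∏ i, f (v i) := by
          refine Finset.sum_congr rfl fun v _ => ?_
          rw [wProd, List.map_ofFn, List.prod_ofFn]
          rfl
      _ = (∑ i, f i) ^ j := (Fintype.sum_pow f j).symm
      _ ≤ c ^ j := pow_le_pow_left₀ (Finset.sum_nonneg fun i _ => hf i) hc j
  calc ∑ j ∈ Finset.range (m+1), ∑ l ∈ w.filter (fun l => l.length = j), wProd f l
      ≤ ∑ j ∈ Finset.range (m+1), c ^ j := Finset.sum_le_sum fun j _ => hfiber j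
    _ = (c ^ (m+1) - 1) / (c - 1) := geom_sum_eq (by linarith) (m+1)
    _ ≤ (1 - c)⁻¹ := by
        rw [div_le_iff_of_neg (by linarith : c - 1 < 0)]
        have h1 : 0 < 1 - c := by linarith
        have h2 : 0 ≤ c ^ (m+1) := pow_nonneg hc0 (m+1)
        have h3 : (1 - c)⁻¹ * (c - 1) = -1 := by field_simp; ring
        rw [h3]
        linarith

end DimPAux

section PackingLemmas

variable {X : Type*} [MetricSpace X]

lemma prePackingMeasure_of_subsingleton {A : Set X} (hA : A.Subsingleton) (s : ℝ) :
    prePackingMeasure s A = 0 := by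
  refine le_antisymm ?_ zero_le
  refine iInf_le_of_le 1 (iInf_le_of_le one_pos ?_)
  refine iSup_le fun c => iSup_le fun ρ => iSup_le fun h1 => iSup_le fun h2 => iSup_le fun h3 => ?_
  exfalso
  have hc : c 0 = c 1 := hA (h1 0) (h1 1)
  have := h3 (show (0:ℕ) ≠ 1 by decide)
  simp only [Set.disjoint_left] at this
  exact this (Metric.mem_closedBall_self (h2 0).1.le)
    (hc ▸ Metric.mem_closedBall_self (h2 1).1.le)

lemma packingMeasure_le_tsum {A : Set X} (f : ℕ → Set X) (hf : A ⊆ ⋃ n, f n) (s : ℝ) :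
    packingMeasure s A ≤ ∑' n, prePackingMeasure s (f n) :=
  iInf_le_of_le f (iInf_le_of_le hf le_rfl)

lemma packingMeasure_of_subsingleton {A : Set X} (hA : A.Subsingleton) (s : ℝ) :
    packingMeasure s A = 0 := by
  refine le_antisymm ?_ zero_le
  calc packingMeasure s A ≤ ∑' _n : ℕ, prePackingMeasure s A :=
        packingMeasure_le_tsum (fun _ => A) (fun x hx => Set.mem_iUnion.2 ⟨0, hx⟩) s
    _ = 0 := by simp [prePackingMeasure_of_subsingleton hA s]

lemma dimP_le_of_packing {A : Set X} {s : ℝ} (hs : 0 ≤ s) (h : packingMeasure s A = 0) :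
    dimP A ≤ s :=
  csInf_le ⟨0, fun _ hx => hx.1⟩ ⟨hs, h⟩

lemma dimP_of_subsingleton {A : Set X} (hA : A.Subsingleton) : dimP A = 0 := by
  refine le_antisymm (dimP_le_of_packing le_rfl (packingMeasure_of_subsingleton hA 0)) ?_
  exact le_csInf ⟨0, le_rfl, packingMeasure_of_subsingleton hA 0⟩ fun b hb => hb.1

lemma dimP_nonneg (A : Set X) : 0 ≤ dimP A := by
  rcases Set.eq_empty_or_nonempty {s : ℝ | 0 ≤ s ∧ packingMeasure s A = 0} with h | h
  · simp [dimP, h, Real.sInf_empty]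
  · exact le_csInf h fun b hb => hb.1

end PackingLemmas

namespace DimPAux

variable {E : Type*} [MetricSpace E] [MeasurableSpace E] [BorelSpace E]

lemma core_packing_zero (N : ℕ) (hN : 1 ≤ N) (S : Fin N → E → E) (r p : Fin N → ℝ)
    (hr : ∀ i, r i ∈ Set.Ioo (0:ℝ) 1)
    (hS : ∀ i x y, dist (S i x) (S i y) = r i * dist x y)
    (hp : ∀ i, 0 < p i) (hpsum : ∑ i, p i = 1)
    (K : Set E) (hKne : K.Nonempty) (hKc : IsCompact K) (hK : K = ⋃ i, S i '' K)
    (μ : Measure E) [IsProbabilityMeasure μ]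
    (hμ : μ = ∑ i, ENNReal.ofReal (p i) • μ.map (S i))
    (β : ℝ → ℝ) (hβ : ∀ q, ∑ i, p i ^ q * r i ^ β q = 1)
    (α : ℝ) (q : ℝ) (hq : q ≤ 0) (s : ℝ) (hs : α * q + β q < s)
    (hD : 0 < Metric.diam K) :
    packingMeasure s {x ∈ K |
        α ≤ Filter.liminf (fun ρ => Real.log (μ (ball x ρ)).toReal / Real.log ρ)
          (𝓝[>] (0:ℝ))} = 0 := by
  classical
  set D := Metric.diam K with hDdef
  -- min and max contraction ratios
  obtain ⟨imin, _, himin⟩ := Finset.exists_min_image Finset.univ r ⟨⟨0, hN⟩, Finset.mem_univ _⟩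
  obtain ⟨imax, _, himax⟩ := Finset.exists_max_image Finset.univ r ⟨⟨0, hN⟩, Finset.mem_univ _⟩
  set rmin := r imin with hrmindef
  set rmax := r imax with hrmaxdef
  have hrmin0 : 0 < rmin := (hr imin).1
  have hrmin1 : rmin ≤ 1 := (hr imin).2.le
  have hrminle : ∀ i, rmin ≤ r i := fun i => himin i (Finset.mem_univ i)
  have hrm0 : 0 < rmax := (hr imax).1
  have hrm1 : rmax < 1 := (hr imax).2
  have hrle : ∀ i, r i ≤ rmax := fun i => himax i (Finset.mem_univ i)
  have hrpos : ∀ i, 0 < r i := fun i => (hr i).1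
  -- the exponents
  set e := s - (α * q + β q) with hedef
  have he : 0 < e := by simp only [hedef]; linarith
  set ε := e / (3 * (|q| + 1)) with hεdef
  have habs0 : (0:ℝ) ≤ |q| := abs_nonneg q
  have hε : 0 < ε := by positivity
  set ε₂ := e / 3 with hε₂def
  have hε₂ : 0 < ε₂ := by positivity
  set texp := β q + ε₂ with htexpdef
  set θ := s - ((α - ε) * q + texp) with hθdef
  have hεq : -(e/3) ≤ ε * q := by
    have h1 : ε * |q| ≤ e / 3 := by
      rw [hεdef, div_mul_eq_mul_div, div_le_div_iff₀ (by positivity) (by norm_num)]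
      nlinarith
    have h2 : -(ε * |q|) ≤ ε * q := by
      have := neg_abs_le q
      nlinarith
    linarith
  have hθ : 0 < θ := by
    have : θ = 2 * (e/3) + ε * q := by
      simp only [hθdef, htexpdef, hε₂def, hedef]; ring
    rw [this]; linarith
  have hβq0 : 0 ≤ β q := by
    have h1 := beta_log_le hr hp hβ q imin
    have h2 : Real.log (p imin) ≤ 0 := Real.log_nonpos (hp imin).le (p_le_one hp hpsum imin)
    have h3 : Real.log rmin < 0 := Real.log_neg hrmin0 (hr imin).2
    nlinarith
  have htexp : 0 < texp := by simp only [htexpdef]; linarith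
  -- measure of the attractor
  have hμK : μ K = 1 :=
    measure_attractor_eq_one hrpos hS (fun i => (hp i).le) hpsum hμ hrm0.le hrm1 hrle
      hKne hKc.isClosed hK
  -- the per-letter weight and its sum
  set f : Fin N → ℝ := fun i => p i ^ q * r i ^ texp with hfdef
  have hf0 : ∀ i, 0 ≤ f i := fun i => (term_pos hr hp q texp i).le
  have hfsum : ∑ i, f i ≤ rmax ^ ε₂ := by
    have : ∀ i : Fin N, f i ≤ (p i ^ q * r i ^ β q) * rmax ^ ε₂ := by
      intro i
      rw [hfdef]
      simp only
      rw [htexpdef, Real.rpow_add (hr i).1, ← mul_assoc]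
      exact mul_le_mul_of_nonneg_left
        (Real.rpow_le_rpow (hr i).1.le (hrle i) hε₂.le) (term_pos hr hp q (β q) i).le
    calc ∑ i, f i ≤ ∑ i, (p i ^ q * r i ^ β q) * rmax ^ ε₂ := Finset.sum_le_sum fun i _ => this i
      _ = (∑ i, p i ^ q * r i ^ β q) * rmax ^ ε₂ := by rw [Finset.sum_mul]
      _ = rmax ^ ε₂ := by rw [hβ q, one_mul]
  have hcl1 : rmax ^ ε₂ < 1 := Real.rpow_lt_one hrm0.le hrm1 hε₂
  set Cs := (1 - rmax ^ ε₂)⁻¹ with hCsdef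
  have hCs0 : 0 < Cs := by rw [hCsdef]; have : 0 < 1 - rmax ^ ε₂ := by linarith
                           positivity
  set Cc := (2:ℝ) ^ ((α - ε) * q) * (2 * D / rmin) ^ texp with hCcdef
  have hCc0 : 0 < Cc := by
    apply mul_pos (Real.rpow_pos_of_pos two_pos _)
    apply Real.rpow_pos_of_pos
    positivity
  -- the level sets
  set X : Set E := {x ∈ K |
      α ≤ Filter.liminf (fun ρ => Real.log (μ (ball x ρ)).toReal / Real.log ρ)
        (𝓝[>] (0:ℝ))} with hXdef
  set Xk : ℕ → Set E := fun k => {x ∈ X | ∀ ρ : ℝ, 0 < ρ → ρ < ((k:ℝ)+1)⁻¹ →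
      (μ (ball x ρ)).toReal ≤ ρ ^ (α - ε)} with hXkdef
  -- covering step
  have hcover : X ⊆ ⋃ k, Xk k := by
    intro x hx
    obtain ⟨hxK, hxl⟩ := hx
    have hev : ∀ᶠ ρ in 𝓝[>] (0:ℝ), (μ (ball x ρ)).toReal ≤ ρ ^ (α - ε) := by
      set F := fun ρ : ℝ => Real.log (μ (ball x ρ)).toReal / Real.log ρ with hFdef
      have hev0 : ∀ᶠ ρ in 𝓝[>] (0:ℝ), α - ε ≤ F ρ := by
        set Lset := {a : ℝ | ∀ᶠ ρ in 𝓝[>] (0:ℝ), a ≤ F ρ} with hLdef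
        have hliminf : Filter.liminf F (𝓝[>] (0:ℝ)) = sSup Lset := Filter.liminf_eq
        by_cases hbdd : BddAbove Lset
        · have hne : Lset.Nonempty := by
            refine ⟨0, ?_⟩
            filter_upwards [Ioo_mem_nhdsGT_of_mem
              (Set.mem_Ico.2 ⟨le_refl (0:ℝ), one_pos⟩)] with ρ hρ
            have h1 : Real.log (μ (ball x ρ)).toReal ≤ 0 :=
              Real.log_nonpos ENNReal.toReal_nonneg (by
                simpa using ENNReal.toReal_le_of_le_ofReal one_pos.le (by
                  simpa using prob_le_one (μ := μ) (s := ball x ρ)))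
            have h2 : Real.log ρ < 0 := Real.log_neg hρ.1 hρ.2
            exact div_nonneg_of_nonpos h1 h2.le
          have hlt : α - ε < sSup Lset := by
            rw [← hliminf]
            have := hxl
            linarith
          obtain ⟨a, ha, hlta⟩ := exists_lt_of_lt_csSup hne hlt
          filter_upwards [ha] with ρ hρ
          linarith
        · obtain ⟨a, ha, hlta⟩ := not_bddAbove_iff.1 hbdd (α - ε)
          filter_upwards [ha] with ρ hρ
          linarith
      filter_upwards [hev0, Ioo_mem_nhdsGT_of_mem
        (Set.mem_Ico.2 ⟨le_refl (0:ℝ), one_pos⟩)] with ρ hFρ hρ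
      set m := (μ (ball x ρ)).toReal with hmdef
      rcases eq_or_lt_of_le (ENNReal.toReal_nonneg : 0 ≤ m) with hm | hm
      · calc m = 0 := hm.symm
          _ ≤ ρ ^ (α - ε) := Real.rpow_nonneg hρ.1.le _
      · have hlogρ : Real.log ρ < 0 := Real.log_neg hρ.1 hρ.2
        have hFval : Real.log m = F ρ * Real.log ρ := by
          simp only [hFdef, ← hmdef]
          field_simp [hlogρ.ne]
        have hlogle : Real.log m ≤ (α - ε) * Real.log ρ := by
          rw [hFval]
          exact mul_le_mul_of_nonpos_right hFρ hlogρ.le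
        calc m = Real.exp (Real.log m) := (Real.exp_log hm).symm
          _ ≤ Real.exp ((α - ε) * Real.log ρ) := Real.exp_le_exp.2 hlogle
          _ = ρ ^ (α - ε) := by rw [Real.rpow_def_of_pos hρ.1, mul_comm]
    rw [eventually_iff, mem_nhdsGT_iff_exists_Ioo_subset] at hev
    obtain ⟨u, hu, hsub⟩ := hev
    obtain ⟨k, hk⟩ := exists_nat_one_div_lt (Set.mem_Ioi.1 hu)
    refine Set.mem_iUnion.2 ⟨k, ⟨⟨hxK, hxl⟩, ?_⟩⟩
    intro ρ hρ0 hρk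
    refine hsub ⟨hρ0, ?_⟩
    rw [one_div] at hk
    exact lt_trans hρk hk
  -- pre-packing of the pieces is zero
  have hpre : ∀ k : ℕ, prePackingMeasure s (Xk k) = 0 := by
    intro k
    refine le_antisymm ?_ zero_le
    have hkpos : (0:ℝ) < ((k:ℝ)+1)⁻¹ := by positivity
    set δ0 := min (2 * D) (((k:ℝ)+1)⁻¹) with hδ0def
    have hδ00 : 0 < δ0 := lt_min (by positivity) hkpos
    have hbound : ∀ δ : ℝ, 0 < δ → δ ≤ δ0 →
        prePackingMeasure s (Xk k) ≤ ENNReal.ofReal (Cc * Cs * δ ^ θ) := by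
      intro δ hδpos hδle
      have hδ2D : δ ≤ 2 * D := le_trans hδle (min_le_left _ _)
      have hδk : δ ≤ ((k:ℝ)+1)⁻¹ := le_trans hδle (min_le_right _ _)
      rw [prePackingMeasure]
      refine le_trans (iInf_le_of_le δ (iInf_le_of_le hδpos le_rfl)) ?_
      refine iSup_le fun c => iSup_le fun ρ => iSup_le fun h1 =>
        iSup_le fun h2 => iSup_le fun h3 => ?_
      have hcK : ∀ n, c n ∈ K := fun n => (h1 n).1.1
      have hρ0 : ∀ n, 0 < ρ n := fun n => (h2 n).1
      have hρD : ∀ n, ρ n ≤ D := fun n => by nlinarith [(h2 n).2]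
      choose L hL1 hL2 hL3 using fun n =>
        exists_word (S := S) hK hrmin0 hrmin1 hrminle hrle hrm0 hrm1 hD (hρ0 n) (hρD n) (hcK n)
      -- measure lower bound for each ball
      have hsub : ∀ n, wMap S (L n) '' K ⊆ ball (c n) (ρ n) := by
        intro n y hy
        obtain ⟨z, hz, rfl⟩ := hy
        obtain ⟨x', hx', hcx⟩ := hL1 n
        rw [mem_ball, ← hcx, dist_wMap hS]
        calc wProd r (L n) * dist z x' ≤ wProd r (L n) * D :=
              mul_le_mul_of_nonneg_left (Metric.dist_le_diam_of_mem hKc.isBounded hz hx')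
                (wProd_nonneg (fun i => (hrpos i).le) _)
          _ < ρ n := hL2 n
      set mb : ℕ → ℝ := fun n => (μ (ball (c n) (ρ n))).toReal with hmbdef
      have hlow : ∀ n, wProd p (L n) ≤ mb n := by
        intro n
        have h1' : ENNReal.ofReal (wProd p (L n)) ≤ μ (ball (c n) (ρ n)) := by
          calc ENNReal.ofReal (wProd p (L n))
              = ENNReal.ofReal (wProd p (L n)) * μ K := by rw [hμK, mul_one]
            _ ≤ μ (wMap S (L n) '' K) :=
                measure_cylinder_ge hrpos hS (fun i => (hp i).le) hμ hKc _
            _ ≤ μ (ball (c n) (ρ n)) := measure_mono (hsub n)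
        exact (ENNReal.ofReal_le_iff_le_toReal (measure_ne_top μ _)).1 h1'
      have hmb0 : ∀ n, 0 < mb n := fun n => lt_of_lt_of_le (wProd_pos hp _) (hlow n)
      have hup : ∀ n, mb n ≤ ρ n ^ (α - ε) := by
        intro n
        refine (h1 n).2 (ρ n) (hρ0 n) ?_
        calc ρ n < 2 * ρ n := by nlinarith [hρ0 n]
          _ ≤ δ := (h2 n).2
          _ ≤ ((k:ℝ)+1)⁻¹ := hδk
      -- injectivity of the word assignment
      have hLinj : Function.Injective L := by
        intro m n hmn
        by_contra hne
        have hdisj := h3 hne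
        obtain ⟨zm, hzm, hzm'⟩ := hL1 m
        have hcn : c n ∈ wMap S (L m) '' K := by rw [hmn]; exact hL1 n
        obtain ⟨zn, hzn, hzn'⟩ := hcn
        have hdist : dist (c n) (c m) ≤ wProd r (L m) * D := by
          rw [← hzm', ← hzn', dist_wMap hS]
          exact mul_le_mul_of_nonneg_left (Metric.dist_le_diam_of_mem hKc.isBounded hzn hzm)
            (wProd_nonneg (fun i => (hrpos i).le) _)
        have hmem : c n ∈ closedBall (c m) (ρ m) :=
          mem_closedBall.2 (le_trans hdist (hL2 m).le)
        exact Set.disjoint_left.1 hdisj hmem (Metric.mem_closedBall_self (hρ0 n).le)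
      -- pointwise estimate
      have hptwise : ∀ n, (2 * ρ n) ^ s ≤ (Cc * δ ^ θ) * wProd f (L n) := by
        intro n
        have h2ρ : (0:ℝ) < 2 * ρ n := by nlinarith [hρ0 n]
        have hsplit : (2 * ρ n) ^ s
            = (2 * ρ n) ^ θ * ((2 * ρ n) ^ ((α - ε) * q) * (2 * ρ n) ^ texp) := by
          rw [← Real.rpow_add h2ρ, ← Real.rpow_add h2ρ]
          congr 1
          rw [hθdef]; ring
        have f1 : (2 * ρ n) ^ θ ≤ δ ^ θ := Real.rpow_le_rpow h2ρ.le (h2 n).2 hθ.le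
        have f2 : (2 * ρ n) ^ ((α - ε) * q)
            ≤ (2:ℝ) ^ ((α - ε) * q) * wProd p (L n) ^ q := by
          rw [Real.mul_rpow two_pos.le (hρ0 n).le]
          refine mul_le_mul_of_nonneg_left ?_ (Real.rpow_nonneg two_pos.le _)
          rw [Real.rpow_mul (hρ0 n).le]
          calc (ρ n ^ (α - ε)) ^ q ≤ mb n ^ q :=
                Real.rpow_le_rpow_of_nonpos (hmb0 n) (hup n) hq
            _ ≤ wProd p (L n) ^ q :=
                Real.rpow_le_rpow_of_nonpos (wProd_pos hp _) (hlow n) hq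
        have f3 : (2 * ρ n) ^ texp
            ≤ (2 * D / rmin) ^ texp * wProd r (L n) ^ texp := by
          rw [← Real.mul_rpow (by positivity) (wProd_nonneg (fun i => (hrpos i).le) _)]
          refine Real.rpow_le_rpow h2ρ.le ?_ htexp.le
          have := hL3 n
          rw [div_mul_eq_mul_div, le_div_iff₀ hrmin0]
          nlinarith
        have hnn1 : (0:ℝ) ≤ (2 * ρ n) ^ θ := Real.rpow_nonneg h2ρ.le _
        have hnn2 : (0:ℝ) ≤ (2 * ρ n) ^ ((α - ε) * q) := Real.rpow_nonneg h2ρ.le _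
        have hnn3 : (0:ℝ) ≤ (2 * ρ n) ^ texp := Real.rpow_nonneg h2ρ.le _
        have hnn4 : (0:ℝ) ≤ δ ^ θ := Real.rpow_nonneg hδpos.le _
        have hnn5 : (0:ℝ) ≤ (2:ℝ) ^ ((α - ε) * q) * wProd p (L n) ^ q :=
          mul_nonneg (Real.rpow_nonneg two_pos.le _) (Real.rpow_nonneg
            (wProd_nonneg (fun i => (hp i).le) _) _)
        have hnn6 : (0:ℝ) ≤ (2 * D / rmin) ^ texp * wProd r (L n) ^ texp :=
          mul_nonneg (Real.rpow_nonneg (by positivity) _) (Real.rpow_nonneg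
            (wProd_nonneg (fun i => (hrpos i).le) _) _)
        calc (2 * ρ n) ^ s
            = (2 * ρ n) ^ θ * ((2 * ρ n) ^ ((α - ε) * q) * (2 * ρ n) ^ texp) := hsplit
          _ ≤ δ ^ θ * (((2:ℝ) ^ ((α - ε) * q) * wProd p (L n) ^ q)
                * ((2 * D / rmin) ^ texp * wProd r (L n) ^ texp)) := by
              refine mul_le_mul f1 ?_ (mul_nonneg hnn2 hnn3) hnn4
              exact mul_le_mul f2 f3 hnn3 hnn5
          _ = (Cc * δ ^ θ) * (wProd p (L n) ^ q * wProd r (L n) ^ texp) := by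
              rw [hCcdef]; ring
          _ = (Cc * δ ^ θ) * wProd f (L n) := by
              rw [wProd_rpow_mul hp hrpos q texp (L n)]
      -- summation
      calc ∑' n, ENNReal.ofReal (2 * ρ n) ^ s
          = ∑' n, ENNReal.ofReal ((2 * ρ n) ^ s) := by
            refine tsum_congr fun n => ?_
            rw [ENNReal.ofReal_rpow_of_pos (by nlinarith [hρ0 n])]
        _ ≤ ∑' n, ENNReal.ofReal ((Cc * δ ^ θ) * wProd f (L n)) :=
            ENNReal.tsum_le_tsum fun n => ENNReal.ofReal_le_ofReal (hptwise n)
        _ = ∑' n, ENNReal.ofReal (Cc * δ ^ θ) * ENNReal.ofReal (wProd f (L n)) := by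
            refine tsum_congr fun n => ?_
            rw [ENNReal.ofReal_mul (by positivity)]
        _ = ENNReal.ofReal (Cc * δ ^ θ) * ∑' n, ENNReal.ofReal (wProd f (L n)) :=
            ENNReal.tsum_mul_left
        _ ≤ ENNReal.ofReal (Cc * δ ^ θ) * ENNReal.ofReal Cs := by
            refine mul_le_mul_right ?_ _
            rw [ENNReal.tsum_eq_iSup_sum]
            refine iSup_le fun t => ?_
            rw [← ENNReal.ofReal_sum_of_nonneg (fun n _ => wProd_nonneg hf0 _)]
            refine ENNReal.ofReal_le_ofReal ?_
            have himg : ∑ l ∈ t.image L, wProd f l = ∑ n ∈ t, wProd f (L n) :=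
              Finset.sum_image (fun a _ b _ h => hLinj h)
            calc ∑ n ∈ t, wProd f (L n) = ∑ l ∈ t.image L, wProd f l := himg.symm
              _ ≤ Cs := sum_wProd_le hf0 hfsum hcl1 _
        _ = ENNReal.ofReal (Cc * Cs * δ ^ θ) := by
            rw [← ENNReal.ofReal_mul (by positivity)]
            congr 1
            ring
    -- let δ tend to zero
    have h1 : Tendsto (fun δ : ℝ => δ ^ θ) (𝓝[>] (0:ℝ)) (𝓝 0) := by
      have hc : ContinuousAt (fun x : ℝ => x ^ θ) 0 :=
        Real.continuousAt_rpow_const 0 θ (Or.inr hθ.le)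
      have := hc.tendsto
      rw [Real.zero_rpow hθ.ne'] at this
      exact this.mono_left nhdsWithin_le_nhds
    have htend : Tendsto (fun δ : ℝ => ENNReal.ofReal (Cc * Cs * δ ^ θ)) (𝓝[>] (0:ℝ)) (𝓝 0) := by
      have h2 : Tendsto (fun δ : ℝ => Cc * Cs * δ ^ θ) (𝓝[>] (0:ℝ)) (𝓝 0) := by
        have := h1.const_mul (Cc * Cs)
        simpa using this
      have := (ENNReal.continuous_ofReal.tendsto 0).comp h2
      simpa [Function.comp_def] using this
    refine ge_of_tendsto htend ?_
    filter_upwards [Ioc_mem_nhdsGT_of_mem (Set.mem_Ico.2 ⟨le_refl (0:ℝ), hδ00⟩)] with δ hδ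
    exact hbound δ hδ.1 hδ.2
  refine le_antisymm ?_ zero_le
  calc packingMeasure s X ≤ ∑' k, prePackingMeasure s (Xk k) :=
        packingMeasure_le_tsum Xk hcover s
    _ = 0 := by simp [hpre]

end DimPAux

set_option maxHeartbeats 2000000 in
theorem dimP_lower_level_set_le (N d : ℕ) (hN : 1 ≤ N)
    (S : Fin N → EuclideanSpace ℝ (Fin d) → EuclideanSpace ℝ (Fin d))
    (r p : Fin N → ℝ) (hr : ∀ i, r i ∈ Set.Ioo (0:ℝ) 1)
    (hS : ∀ i x y, dist (S i x) (S i y) = r i * dist x y)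
    (hp : ∀ i, 0 < p i) (hpsum : ∑ i, p i = 1)
    (K : Set (EuclideanSpace ℝ (Fin d))) (hKne : K.Nonempty) (hKc : IsCompact K)
    (hK : K = ⋃ i, S i '' K)
    (μ : Measure (EuclideanSpace ℝ (Fin d))) [IsProbabilityMeasure μ]
    (hμ : μ = ∑ i, ENNReal.ofReal (p i) • μ.map (S i))
    -- open set condition
    (U : Set (EuclideanSpace ℝ (Fin d))) (hUo : IsOpen U) (hUne : U.Nonempty)
    (hUb : Bornology.IsBounded U) (hUsub : ∀ i, S i '' U ⊆ U)
    (hUdisj : Pairwise fun i j : Fin N => Disjoint (S i '' U) (S j '' U))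
    (β : ℝ → ℝ) (hβ : ∀ q, ∑ i, p i ^ q * r i ^ β q = 1)
    (β'0 : ℝ) (hβ' : HasDerivAt β β'0 0)
    (α : ℝ) (hα : -β'0 ≤ α) :
    dimP {x ∈ K |
        α ≤ Filter.liminf (fun ρ => Real.log (μ (ball x ρ)).toReal / Real.log ρ)
          (𝓝[>] (0:ℝ))} ≤
      sInf (Set.range fun q : ℝ => α * q + β q) := by
  classical
  open DimPAux in
  set Ξ : Set (EuclideanSpace ℝ (Fin d)) := {x ∈ K |
      α ≤ Filter.liminf (fun ρ => Real.log (μ (ball x ρ)).toReal / Real.log ρ)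
        (𝓝[>] (0:ℝ))} with hΞdef
  set g : ℝ → ℝ := fun q => α * q + β q with hgdef
  -- basic index extrema
  obtain ⟨imax, _, himax⟩ := Finset.exists_max_image Finset.univ r ⟨⟨0, hN⟩, Finset.mem_univ _⟩
  set rmax := r imax with hrmaxdef
  have hrm0 : 0 < rmax := (hr imax).1
  have hrm1 : rmax < 1 := (hr imax).2
  have hrle : ∀ i, r i ≤ rmax := fun i => himax i (Finset.mem_univ i)
  set A : Fin N → ℝ := fun i => Real.log (p i) / Real.log (r i) with hAdef
  obtain ⟨jm, _, hjm⟩ := Finset.exists_max_image Finset.univ A ⟨⟨0, hN⟩, Finset.mem_univ _⟩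
  set am := A jm with hamdef
  have hAle : ∀ i, A i ≤ am := fun i => hjm i (Finset.mem_univ i)
  have hlogr_neg : ∀ i, Real.log (r i) < 0 := fun i => Real.log_neg (hr i).1 (hr i).2
  have hlogp_nonpos : ∀ i, Real.log (p i) ≤ 0 :=
    fun i => Real.log_nonpos (hp i).le (p_le_one hp hpsum i)
  have hA0 : ∀ i, 0 ≤ A i := fun i =>
    div_nonneg_of_nonpos (hlogp_nonpos i) (hlogr_neg i).le
  have ham0 : 0 ≤ am := hA0 jm
  -- lower bound for β
  have hF1 : ∀ (q' : ℝ) (i : Fin N), -q' * A i ≤ β q' := by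
    intro q' i
    have h := beta_log_le hr hp hβ q' i
    have hLr := hlogr_neg i
    have heq : -q' * A i = (-q' * Real.log (p i)) / Real.log (r i) := by
      rw [hAdef]; ring
    rw [heq, div_le_iff_of_neg hLr]
    nlinarith
  have hβ00 : 0 ≤ β 0 := by
    have := hF1 0 jm
    simpa using this
  -- upper bound for β for nonpositive exponents
  set C0 := Real.log N / (-Real.log rmax) with hC0def
  have hlogN : 0 ≤ Real.log N := Real.log_nonneg (by exact_mod_cast hN)
  have hF2 : ∀ q' ≤ (0:ℝ), β q' ≤ -q' * am + C0 := by
    intro q' hq'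
    obtain ⟨i, hi⟩ := beta_log_ge hN hr hp hβ q'
    have hLr := hlogr_neg i
    have h1 : β q' ≤ (-Real.log N - q' * Real.log (p i)) / Real.log (r i) := by
      rw [le_div_iff_of_neg hLr]
      nlinarith
    have h2 : (-Real.log N - q' * Real.log (p i)) / Real.log (r i)
        = Real.log N / (-Real.log (r i)) + (-q') * A i := by
      rw [hAdef]
      field_simp
      ring
    have h3 : Real.log N / (-Real.log (r i)) ≤ C0 := by
      rw [hC0def]
      apply div_le_div_of_nonneg_left hlogN (by linarith [hlogr_neg imax])
      have := Real.log_le_log (hr i).1 (hrle i)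
      linarith
    have h4 : (-q') * A i ≤ (-q') * am := by
      have : 0 ≤ -q' := by linarith
      exact mul_le_mul_of_nonneg_left (hAle i) this
    calc β q' ≤ Real.log N / (-Real.log (r i)) + (-q') * A i := by rw [← h2]; exact h1
      _ ≤ C0 + (-q') * am := add_le_add h3 h4
      _ = -q' * am + C0 := by ring
  -- g is at least g 0 on the right half line
  have hgmono : ∀ q' : ℝ, 0 < q' → g 0 ≤ g q' := by
    intro q' hq'
    have hsl := beta_support_line hr hp hN hβ hβ' hq'
    have : 0 ≤ (α + β'0) * q' := mul_nonneg (by linarith) hq'.le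
    simp only [hgdef]
    nlinarith
  -- the two unbounded-below helpers
  have hunbdd : am < α → ¬BddBelow (Set.range g) → True := fun _ _ => trivial
  have hcontra : am < α → BddBelow (Set.range g) → False := by
    intro ham hbb
    obtain ⟨b, hb⟩ := hbb
    set q' := min 0 ((b - 1 - C0) / (α - am)) with hq'def
    have hq0 : q' ≤ 0 := min_le_left _ _
    have hq1 : q' ≤ (b - 1 - C0) / (α - am) := min_le_right _ _
    have hpos : 0 < α - am := by linarith
    have h5 : q' * (α - am) ≤ b - 1 - C0 := by
      rw [← div_mul_cancel₀ (b - 1 - C0) hpos.ne']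
      exact mul_le_mul_of_nonneg_right hq1 hpos.le
    have h6 : g q' ≤ b - 1 := by
      have := hF2 q' hq0
      simp only [hgdef]
      nlinarith
    have := hb ⟨q', rfl⟩
    linarith
  -- case on the diameter of K
  rcases eq_or_lt_of_le (Metric.diam_nonneg : 0 ≤ Metric.diam K) with hD | hD
  · -- K is a subsingleton
    have hsub : K.Subsingleton := by
      intro x hx y hy
      have := Metric.dist_le_diam_of_mem hKc.isBounded hx hy
      rw [← hD] at this
      exact dist_le_zero.1 this
    have hdim : dimP Ξ = 0 := dimP_of_subsingleton (hsub.anti fun x hx => hx.1)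
    rw [hdim]
    by_cases hbb : BddBelow (Set.range g)
    · by_cases ham : α ≤ am
      · refine le_csInf ⟨g 0, ⟨0, rfl⟩⟩ ?_
        rintro b ⟨q', rfl⟩
        rcases le_or_gt q' 0 with hq' | hq'
        · have h1 := hF1 q' jm
          have h2 : 0 ≤ (-q') * (am - α) := mul_nonneg (by linarith) (by linarith)
          simp only [hgdef]
          nlinarith
        · have := hgmono q' hq'
          simp only [hgdef] at this ⊢
          nlinarith [hβ00]
      · exact absurd (hcontra (by linarith) hbb) not_false
    · rw [Real.sInf_of_not_bddBelow hbb]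
  · -- main case
    by_cases ham : α ≤ am
    · have hkey : ∀ q' ≤ (0:ℝ), dimP Ξ ≤ g q' := by
        intro q' hq'
        have hg0 : 0 ≤ g q' := by
          have h1 := hF1 q' jm
          have h2 : 0 ≤ (-q') * (am - α) := mul_nonneg (by linarith) (by linarith)
          simp only [hgdef]
          nlinarith
        refine le_of_forall_pos_le_add ?_
        intro η hη
        refine dimP_le_of_packing (by linarith) ?_
        exact core_packing_zero N hN S r p hr hS hp hpsum K hKne hKc hK μ hμ β hβ
          α q' hq' (g q' + η) (by simp only [hgdef]; linarith) hD
      refine le_csInf ⟨g 0, ⟨0, rfl⟩⟩ ?_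
      rintro b ⟨q', rfl⟩
      rcases le_or_gt q' 0 with hq' | hq'
      · exact hkey q' hq'
      · exact le_trans (hkey 0 le_rfl) (hgmono q' hq')
    · push_neg at ham
      by_cases hbb : BddBelow (Set.range g)
      · exact absurd (hcontra ham hbb) not_false
      · rw [Real.sInf_of_not_bddBelow hbb]
        refine le_of_forall_pos_le_add ?_
        intro η hη
        have hpos : 0 < α - am := by linarith
        set q' := min 0 ((η / 2 - C0) / (α - am)) with hq'def
        have hq0 : q' ≤ 0 := min_le_left _ _
        have hq1 : q' ≤ (η / 2 - C0) / (α - am) := min_le_right _ _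
        have h5 : q' * (α - am) ≤ η / 2 - C0 := by
          rw [← div_mul_cancel₀ (η / 2 - C0) hpos.ne']
          exact mul_le_mul_of_nonneg_right hq1 hpos.le
        have h6 : α * q' + β q' < η := by
          have := hF2 q' hq0
          nlinarith
        refine le_trans (dimP_le_of_packing ?_ ?_) (by linarith : (η:ℝ) ≤ 0 + η)
        · linarith
        · exact core_packing_zero N hN S r p hr hS hp hpsum K hKne hKc hK μ hμ β hβ
            α q' hq0 η h6 hD
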